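/- Let q, β > 0 and k ∈ ℕ. Then ∫_{-∞}^{∞} |h|^k Ψ(h) dh ≤ (1 - e^{-β})/((1 + e^{-β})(k+1)) + (q + 1/q)·e^{β}·k!/β^k, which is finite; in particular Ψ has finite absolute moments of all orders. -/

import Mathlib

open MeasureTheory Filter Real

noncomputable def nu (q β x : ℝ) : ℝ :=
  (1 - q * Real.exp (-β * x)) / (1 + q * Real.exp (-β * x))

noncomputable def G (q β x : ℝ) : ℝ := (1/4) * (nu q β (x+1) - nu q β (x-1))

noncomputable def Psi (q β x : ℝ) : ℝ := (G q β x + G (1/q) β x) / 2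

lemma nu_add_one (q β x : ℝ) :
    nu q β (x+1) = (1 - q * Real.exp (-β*x) * Real.exp (-β)) /
      (1 + q * Real.exp (-β*x) * Real.exp (-β)) := by
  unfold nu
  rw [show -β*(x+1) = -β*x + -β by ring, Real.exp_add]
  ring_nf

lemma nu_sub_one (q β x : ℝ) (hq : 0 < q) :
    nu q β (x-1) = (Real.exp (-β) - q * Real.exp (-β*x)) /
      (Real.exp (-β) + q * Real.exp (-β*x)) := by
  have hs : (0:ℝ) < Real.exp (-β*x) := Real.exp_pos _
  have hE : (0:ℝ) < Real.exp (-β) := Real.exp_pos _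
  unfold nu
  rw [show -β*(x-1) = -β*x + β by ring, Real.exp_add,
    show Real.exp β = (Real.exp (-β))⁻¹ by rw [← Real.exp_neg, neg_neg]]
  rw [div_eq_div_iff (by positivity) (by positivity)]
  field_simp

lemma G_nonneg (q β x : ℝ) (hq : 0 < q) (hβ : 0 < β) : 0 ≤ G q β x := by
  have hs : (0:ℝ) < Real.exp (-β*x) := Real.exp_pos _
  have hE : (0:ℝ) < Real.exp (-β) := Real.exp_pos _
  have hE1 : Real.exp (-β) < 1 := Real.exp_lt_one_iff.mpr (by linarith)
  unfold G
  rw [nu_add_one, nu_sub_one q β x hq]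
  set E := Real.exp (-β)
  set t := q * Real.exp (-β*x) with ht'
  have ht : 0 < t := by positivity
  have key : (E - t)/(E + t) ≤ (1 - t*E)/(1 + t*E) := by
    rw [div_le_div_iff₀ (by positivity) (by positivity)]
    nlinarith [sq_nonneg t, mul_pos ht hE]
  have : q * Real.exp (-β*x) * E = t * E := by rw [ht']
  rw [this]
  linarith

lemma G_le_const (q β x : ℝ) (hq : 0 < q) (hβ : 0 < β) :
    G q β x ≤ (1 - Real.exp (-β)) / (2*(1 + Real.exp (-β))) := by
  have hs : (0:ℝ) < Real.exp (-β*x) := Real.exp_pos _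
  have hE : (0:ℝ) < Real.exp (-β) := Real.exp_pos _
  have hE1 : Real.exp (-β) < 1 := Real.exp_lt_one_iff.mpr (by linarith)
  unfold G
  rw [nu_add_one, nu_sub_one q β x hq]
  set E := Real.exp (-β)
  set t := q * Real.exp (-β*x) with ht'
  have ht : 0 < t := by positivity
  have key : (1 - t*E)/(1 + t*E) - (E - t)/(E + t) ≤ 2*(1-E)/(1+E) := by
    rw [div_sub_div _ _ (by positivity : (1:ℝ) + t*E ≠ 0) (by positivity : E + t ≠ 0),
      div_le_div_iff₀ (by positivity) (by positivity)]
    nlinarith [mul_nonneg (mul_nonneg (sub_nonneg.2 hE1.le) hE.le) (sq_nonneg (1-t)),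
      mul_pos ht hE]
  calc (1/4 : ℝ) * ((1 - t*E)/(1 + t*E) - (E - t)/(E + t))
      ≤ (1/4) * (2*(1-E)/(1+E)) := by linarith
    _ = (1-E)/(2*(1+E)) := by
        field_simp
        ring

lemma one_sub_exp_sq (β : ℝ) : 1 - Real.exp (-β) ^ 2 ≤ 2 * β := by
  have h := Real.add_one_le_exp (-(2*β))
  have : Real.exp (-β) ^ 2 = Real.exp (-(2*β)) := by
    rw [← Real.exp_nat_mul]; ring_nf
  linarith [this ▸ h]

lemma G_le_tail₁ (q β x : ℝ) (hq : 0 < q) (hβ : 0 < β) :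
    G q β x ≤ β * q * Real.exp β * Real.exp (-β*x) := by
  have hs : (0:ℝ) < Real.exp (-β*x) := Real.exp_pos _
  have hE : (0:ℝ) < Real.exp (-β) := Real.exp_pos _
  have h2β := one_sub_exp_sq β
  have hF : Real.exp β = (Real.exp (-β))⁻¹ := by rw [← Real.exp_neg, neg_neg]
  unfold G
  rw [nu_add_one, nu_sub_one q β x hq, hF]
  set E := Real.exp (-β)
  set t := q * Real.exp (-β*x) with ht'
  have ht : 0 < t := by positivity
  have key : (1 - t*E)/(1 + t*E) - (E - t)/(E + t) ≤ 4*β*t/E := by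
    rw [div_sub_div _ _ (by positivity : (1:ℝ) + t*E ≠ 0) (by positivity : E + t ≠ 0),
      div_le_div_iff₀ (by positivity) hE]
    nlinarith [mul_le_mul_of_nonneg_left h2β (mul_nonneg ht.le hE.le),
      mul_nonneg (mul_nonneg hβ.le ht.le) ht.le,
      mul_nonneg (mul_nonneg (mul_nonneg hβ.le ht.le) ht.le) hE.le,
      mul_nonneg (mul_nonneg (mul_nonneg hβ.le ht.le) hE.le) hE.le]
  have : β * q * E⁻¹ * Real.exp (-β*x) = (1/4) * (4*β*t/E) := by
    rw [ht']; field_simp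
  rw [this]
  linarith

lemma G_le_tail₂ (q β x : ℝ) (hq : 0 < q) (hβ : 0 < β) :
    G q β x ≤ β * (1/q) * Real.exp β * Real.exp (β*x) := by
  have hs : (0:ℝ) < Real.exp (-β*x) := Real.exp_pos _
  have hE : (0:ℝ) < Real.exp (-β) := Real.exp_pos _
  have h2β := one_sub_exp_sq β
  have hF : Real.exp β = (Real.exp (-β))⁻¹ := by rw [← Real.exp_neg, neg_neg]
  have hsx : Real.exp (β*x) = (Real.exp (-β*x))⁻¹ := by
    rw [← Real.exp_neg]; ring_nf
  unfold G
  rw [nu_add_one, nu_sub_one q β x hq, hF, hsx]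
  set E := Real.exp (-β)
  set s := Real.exp (-β*x) with hs'
  set t := q * s with ht'
  have ht : 0 < t := by positivity
  have key : (1 - t*E)/(1 + t*E) - (E - t)/(E + t) ≤ 4*β/(t*E) := by
    rw [div_sub_div _ _ (by positivity : (1:ℝ) + t*E ≠ 0) (by positivity : E + t ≠ 0),
      div_le_div_iff₀ (by positivity) (by positivity)]
    nlinarith [mul_le_mul_of_nonneg_left h2β (mul_nonneg ht.le hE.le),
      mul_nonneg hβ.le (mul_nonneg ht.le hE.le),
      mul_nonneg (mul_nonneg hβ.le ht.le) hE.le,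
      mul_nonneg (mul_nonneg (mul_nonneg hβ.le ht.le) hE.le) hE.le,
      mul_nonneg hβ.le hE.le, mul_nonneg hβ.le ht.le]
  have : β * (1/q) * E⁻¹ * s⁻¹ = (1/4) * (4*β/(t*E)) := by
    rw [ht']; field_simp
  rw [this]
  linarith

lemma Psi_nonneg (q β x : ℝ) (hq : 0 < q) (hβ : 0 < β) : 0 ≤ Psi q β x := by
  have h1 := G_nonneg q β x hq hβ
  have h2 := G_nonneg (1/q) β x (by positivity) hβ
  unfold Psi; linarith

lemma Psi_le_const (q β x : ℝ) (hq : 0 < q) (hβ : 0 < β) :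
    Psi q β x ≤ (1 - Real.exp (-β)) / (2*(1 + Real.exp (-β))) := by
  have h1 := G_le_const q β x hq hβ
  have h2 := G_le_const (1/q) β x (by positivity) hβ
  unfold Psi; linarith

lemma Psi_le_exp (q β x : ℝ) (hq : 0 < q) (hβ : 0 < β) :
    Psi q β x ≤ (β/2) * (q + 1/q) * Real.exp β * Real.exp (-β*|x|) := by
  rcases le_or_gt 0 x with hx | hx
  · rw [abs_of_nonneg hx]
    have h1 := G_le_tail₁ q β x hq hβ
    have h2 := G_le_tail₁ (1/q) β x (by positivity) hβ
    unfold Psi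
    calc (G q β x + G (1/q) β x) / 2
        ≤ (β * q * Real.exp β * Real.exp (-β*x)
            + β * (1/q) * Real.exp β * Real.exp (-β*x)) / 2 := by linarith
      _ = (β/2) * (q + 1/q) * Real.exp β * Real.exp (-β*x) := by ring
  · rw [abs_of_neg hx]
    have h1 := G_le_tail₂ q β x hq hβ
    have h2 := G_le_tail₂ (1/q) β x (by positivity) hβ
    rw [one_div_one_div] at h2
    have he : Real.exp (-β * -x) = Real.exp (β*x) := by ring_nf
    rw [he]
    unfold Psi
    calc (G q β x + G (1/q) β x) / 2
        ≤ (β * (1/q) * Real.exp β * Real.exp (β*x)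
            + β * q * Real.exp β * Real.exp (β*x)) / 2 := by linarith
      _ = (β/2) * (q + 1/q) * Real.exp β * Real.exp (β*x) := by ring

lemma continuous_Psi (q β : ℝ) (hq : 0 < q) : Continuous (Psi q β) := by
  have hnu : ∀ p : ℝ, 0 < p → Continuous (fun x => nu p β x) := by
    intro p hp
    apply Continuous.div (by fun_prop) (by fun_prop)
    intro x
    have : (0:ℝ) < 1 + p * Real.exp (-β*x) := by positivity
    exact this.ne'
  have hG : ∀ p : ℝ, 0 < p → Continuous (fun x => G p β x) := by
    intro p hp
    unfold G
    exact continuous_const.mul (((hnu p hp).comp (by fun_prop)).sub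
      ((hnu p hp).comp (by fun_prop)))
  unfold Psi
  exact ((hG q hq).add (hG (1/q) (by positivity))).div_const 2

open Set in
lemma integrable_comp_abs' {f : ℝ → ℝ} (hf : IntegrableOn f (Ioi 0)) :
    Integrable fun x => f |x| := by
  have hf' : IntegrableOn (fun x => f |x|) (Ioi 0) := by
    apply hf.congr_fun ?_ measurableSet_Ioi
    intro x hx
    simp only [abs_of_pos (Set.mem_Ioi.mp hx)]
  have int_Iic : IntegrableOn (fun x ↦ f |x|) (Iic 0) := by
    rw [← Measure.map_neg_eq_self (volume : Measure ℝ)]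
    have m : MeasurableEmbedding fun x : ℝ => -x := (Homeomorph.neg ℝ).measurableEmbedding
    rw [m.integrableOn_map_iff]
    simp_rw [Function.comp_def, abs_neg, neg_preimage, neg_Iic, neg_zero]
    exact Iff.mpr integrableOn_Ici_iff_integrableOn_Ioi hf'
  have := int_Iic.union hf'
  rwa [Iic_union_Ioi, integrableOn_univ] at this

lemma integrableOn_pow_exp (β : ℝ) (hβ : 0 < β) (k : ℕ) :
    IntegrableOn (fun t : ℝ => t ^ k * Real.exp (-β * t)) (Set.Ioi 0) := by
  have h := integrableOn_rpow_mul_exp_neg_mul_rpow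
    (by linarith [Nat.cast_nonneg (α := ℝ) k] : (-1:ℝ) < (k:ℝ))
    zero_lt_one hβ
  apply h.congr_fun ?_ measurableSet_Ioi
  intro x hx
  simp only [Real.rpow_natCast, Real.rpow_one]

lemma integral_pow_exp (β : ℝ) (hβ : 0 < β) (k : ℕ) :
    ∫ t in Set.Ioi (0:ℝ), t ^ k * Real.exp (-β * t) = (Nat.factorial k) / β^(k+1) := by
  have h1 : ∫ t in Set.Ioi (0:ℝ), t ^ k * Real.exp (-β * t)
      = (1/β) ^ ((k:ℝ)+1) * Real.Gamma ((k:ℝ)+1) := by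
    rw [← Real.integral_rpow_mul_exp_neg_mul_Ioi (by positivity : (0:ℝ) < (k:ℝ)+1) hβ]
    refine setIntegral_congr_fun measurableSet_Ioi (fun x hx => ?_)
    rw [show (k:ℝ)+1-1 = (k:ℝ) by ring, Real.rpow_natCast]
    ring_nf
  rw [h1, Real.Gamma_nat_eq_factorial,
    show ((k:ℝ)+1) = ((k+1 : ℕ):ℝ) by push_cast; ring, Real.rpow_natCast,
    div_pow, one_pow]
  ring

lemma integral_abs_pow_Ioc (k : ℕ) :
    ∫ h in Set.Ioc (-1:ℝ) 1, |h| ^ k = 2 / (k+1) := by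
  rw [← intervalIntegral.integral_of_le (by norm_num : (-1:ℝ) ≤ 1)]
  have hii : ∀ a b : ℝ, IntervalIntegrable (fun x : ℝ => |x| ^ k) volume a b :=
    fun a b => (continuous_abs.pow k).intervalIntegrable a b
  have e1 : ∫ x in (0:ℝ)..1, |x| ^ k = 1 / (k+1) := by
    rw [show (∫ x in (0:ℝ)..1, |x| ^ k) = ∫ x in (0:ℝ)..1, x ^ k from
      intervalIntegral.integral_congr (fun x hx => by
        rw [Set.uIcc_of_le (by norm_num : (0:ℝ) ≤ 1)] at hx
        simp [abs_of_nonneg hx.1])]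
    rw [integral_pow]
    norm_num
  have e2 : ∫ x in (-1:ℝ)..0, |x| ^ k = ∫ x in (0:ℝ)..1, |x| ^ k := by
    have := intervalIntegral.integral_comp_neg (a := (0:ℝ)) (b := 1)
      (fun x : ℝ => |x| ^ k)
    simp only [abs_neg, neg_zero, neg_neg] at this
    exact this.symm
  rw [← intervalIntegral.integral_add_adjacent_intervals (hii (-1) 0) (hii 0 1), e1, e2, e1]
  ring

theorem Psi_absolute_moments (q β : ℝ) (hq : 0 < q) (hβ : 0 < β) (k : ℕ) :
    (Integrable fun h : ℝ => |h| ^ k * Psi q β h) ∧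
    (∫ h : ℝ, |h| ^ k * Psi q β h) ≤
      (1 - Real.exp (-β)) / ((1 + Real.exp (-β)) * (k + 1)) +
        (q + 1/q) * Real.exp β * (Nat.factorial k) / β ^ k := by
  have hE : (0:ℝ) < Real.exp (-β) := Real.exp_pos _
  have hE1 : Real.exp (-β) < 1 := Real.exp_lt_one_iff.mpr (by linarith)
  set B : ℝ := (β/2) * (q + 1/q) * Real.exp β with hB_def
  have hB : 0 ≤ B := by rw [hB_def]; positivity
  set g : ℝ → ℝ := fun h => B * (|h| ^ k * Real.exp (-β * |h|)) with hg_def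
  have hg0 : ∀ h, 0 ≤ g h := fun h => by rw [hg_def]; positivity
  have hg_int : Integrable g :=
    integrable_comp_abs' ((integrableOn_pow_exp β hβ k).const_mul B)
  have hg_val : ∫ h, g h = (q + 1/q) * Real.exp β * (Nat.factorial k) / β ^ k := by
    calc ∫ h, g h = 2 * ∫ t in Set.Ioi (0:ℝ), B * (t ^ k * Real.exp (-β * t)) :=
        integral_comp_abs (f := fun t => B * (t ^ k * Real.exp (-β * t)))
      _ = 2 * (B * ((Nat.factorial k) / β ^ (k+1))) := by
          rw [MeasureTheory.integral_const_mul, integral_pow_exp β hβ k]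
      _ = (q + 1/q) * Real.exp β * (Nat.factorial k) / β ^ k := by
          rw [hB_def]
          field_simp
          ring
  have hPsi0 : ∀ h, 0 ≤ Psi q β h := fun h => Psi_nonneg q β h hq hβ
  have hfg : ∀ h : ℝ, |h| ^ k * Psi q β h ≤ g h := by
    intro h
    calc |h| ^ k * Psi q β h
        ≤ |h| ^ k * ((β/2) * (q + 1/q) * Real.exp β * Real.exp (-β * |h|)) :=
          mul_le_mul_of_nonneg_left (Psi_le_exp q β h hq hβ) (by positivity)
      _ = g h := by rw [hg_def, hB_def]; ring
  have hf_meas : AEStronglyMeasurable (fun h : ℝ => |h| ^ k * Psi q β h) volume :=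
    ((continuous_abs.pow k).mul (continuous_Psi q β hq)).aestronglyMeasurable
  have hf_int : Integrable (fun h : ℝ => |h| ^ k * Psi q β h) := by
    apply hg_int.mono' hf_meas
    filter_upwards with h
    rw [Real.norm_eq_abs, abs_of_nonneg (mul_nonneg (by positivity) (hPsi0 h))]
    exact hfg h
  refine ⟨hf_int, ?_⟩
  rw [← integral_add_compl (measurableSet_Ioc : MeasurableSet (Set.Ioc (-1:ℝ) 1)) hf_int]
  have h1 : ∫ h in Set.Ioc (-1:ℝ) 1, |h| ^ k * Psi q β h
      ≤ (1 - Real.exp (-β)) / ((1 + Real.exp (-β)) * (k + 1)) := by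
    have hbd : IntegrableOn
        (fun h : ℝ => |h| ^ k * ((1 - Real.exp (-β)) / (2*(1 + Real.exp (-β)))))
        (Set.Ioc (-1:ℝ) 1) :=
      ((continuous_abs.pow k).mul continuous_const).integrableOn_Ioc
    calc ∫ h in Set.Ioc (-1:ℝ) 1, |h| ^ k * Psi q β h
        ≤ ∫ h in Set.Ioc (-1:ℝ) 1,
            |h| ^ k * ((1 - Real.exp (-β)) / (2*(1 + Real.exp (-β)))) := by
          refine setIntegral_mono_on hf_int.integrableOn hbd measurableSet_Ioc ?_
          intro x _
          exact mul_le_mul_of_nonneg_left (Psi_le_const q β x hq hβ) (by positivity)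
      _ = (∫ h in Set.Ioc (-1:ℝ) 1, |h| ^ k)
            * ((1 - Real.exp (-β)) / (2*(1 + Real.exp (-β)))) :=
          MeasureTheory.integral_mul_const _ _
      _ = (1 - Real.exp (-β)) / ((1 + Real.exp (-β)) * (k + 1)) := by
          rw [integral_abs_pow_Ioc k]
          have hk : ((k:ℝ) + 1) ≠ 0 := by positivity
          field_simp
  have h2 : ∫ h in (Set.Ioc (-1:ℝ) 1)ᶜ, |h| ^ k * Psi q β h
      ≤ (q + 1/q) * Real.exp β * (Nat.factorial k) / β ^ k := by
    calc ∫ h in (Set.Ioc (-1:ℝ) 1)ᶜ, |h| ^ k * Psi q β h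
        ≤ ∫ h in (Set.Ioc (-1:ℝ) 1)ᶜ, g h :=
          setIntegral_mono_on hf_int.integrableOn hg_int.integrableOn
            measurableSet_Ioc.compl (fun x _ => hfg x)
      _ ≤ ∫ h, g h := setIntegral_le_integral hg_int (ae_of_all _ hg0)
      _ = (q + 1/q) * Real.exp β * (Nat.factorial k) / β ^ k := hg_val
  linarith
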